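/- For R > 1, let μ(x) = x²/2 − log(x) and define f(ρ,R) = exp(μ(ρ)−μ(R)) / (ρ·√(1 − exp(2[μ(ρ)−μ(R)]))) for ρ in the open interval where μ(ρ) < μ(R). Then ρ ↦ f(ρ,R) is strictly convex on this interval, i.e., ∂²f/∂ρ² > 0. -/

import Mathlib

open Real Set

/-- μ(x) = x²/2 − log x. -/
noncomputable def mu (x : ℝ) : ℝ := x ^ 2 / 2 - Real.log x

/-- f(ρ, R) = exp(μ(ρ)−μ(R)) / (ρ √(1 − exp(2(μ(ρ)−μ(R))))). -/
noncomputable def f (ρ R : ℝ) : ℝ :=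
  Real.exp (mu ρ - mu R) / (ρ * Real.sqrt (1 - Real.exp (2 * (mu ρ - mu R))))

noncomputable def gg (C ρ : ℝ) : ℝ := C * (ρ ^ 4 * Real.exp (-ρ ^ 2)) - ρ ^ 2

noncomputable def gg1 (C ρ : ℝ) : ℝ :=
  C * ((4 * ρ ^ 3 - 2 * ρ ^ 5) * Real.exp (-ρ ^ 2)) - 2 * ρ

noncomputable def gg2 (C ρ : ℝ) : ℝ :=
  C * ((12 * ρ ^ 2 - 18 * ρ ^ 4 + 4 * ρ ^ 6) * Real.exp (-ρ ^ 2)) - 2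

noncomputable def FF (C ρ : ℝ) : ℝ := gg C ρ ^ (-(1 / 2) : ℝ)

noncomputable def FF1 (C ρ : ℝ) : ℝ := -(1 / 2) * gg C ρ ^ (-(3 / 2) : ℝ) * gg1 C ρ

lemma hasDerivAt_gg (C ρ : ℝ) : HasDerivAt (gg C) (gg1 C ρ) ρ := by
  have h2 : HasDerivAt (fun ρ : ℝ => -ρ ^ 2) (-(2 * ρ)) ρ := by
    simpa using (hasDerivAt_pow 2 ρ).fun_neg
  have hE : HasDerivAt (fun ρ : ℝ => Real.exp (-ρ ^ 2))
      (Real.exp (-ρ ^ 2) * -(2 * ρ)) ρ := h2.exp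
  have h4 : HasDerivAt (fun ρ : ℝ => ρ ^ 4) (4 * ρ ^ 3) ρ := by
    simpa using hasDerivAt_pow 4 ρ
  have hsq : HasDerivAt (fun ρ : ℝ => ρ ^ 2) (2 * ρ) ρ := by
    simpa using hasDerivAt_pow 2 ρ
  have := (((h4.mul hE).const_mul C).sub hsq)
  refine this.congr_deriv ?_
  unfold gg1
  ring

lemma hasDerivAt_gg1 (C ρ : ℝ) : HasDerivAt (gg1 C) (gg2 C ρ) ρ := by
  have h2 : HasDerivAt (fun ρ : ℝ => -ρ ^ 2) (-(2 * ρ)) ρ := by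
    simpa using (hasDerivAt_pow 2 ρ).fun_neg
  have hE : HasDerivAt (fun ρ : ℝ => Real.exp (-ρ ^ 2))
      (Real.exp (-ρ ^ 2) * -(2 * ρ)) ρ := h2.exp
  have hp : HasDerivAt (fun ρ : ℝ => 4 * ρ ^ 3 - 2 * ρ ^ 5)
      (4 * (3 * ρ ^ 2) - 2 * (5 * ρ ^ 4)) ρ := by
    simpa using ((hasDerivAt_pow 3 ρ).const_mul 4).fun_sub ((hasDerivAt_pow 5 ρ).const_mul 2)
  have hlin : HasDerivAt (fun ρ : ℝ => 2 * ρ) 2 ρ := by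
    simpa using (hasDerivAt_id ρ).const_mul 2
  have := ((hp.mul hE).const_mul C).sub hlin
  refine this.congr_deriv ?_
  unfold gg2
  ring

lemma hasDerivAt_FF (C ρ : ℝ) (hg : 0 < gg C ρ) : HasDerivAt (FF C) (FF1 C ρ) ρ := by
  have := (hasDerivAt_gg C ρ).rpow_const (p := (-(1 / 2) : ℝ)) (Or.inl hg.ne')
  refine this.congr_deriv ?_
  rw [show (-(1 / 2) : ℝ) - 1 = -(3 / 2) by norm_num]
  unfold FF1
  ring

lemma hasDerivAt_FF1 (C ρ : ℝ) (hg : 0 < gg C ρ) :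
    HasDerivAt (FF1 C)
      (gg C ρ ^ (-(5 / 2) : ℝ) * ((3 * gg1 C ρ ^ 2 - 2 * gg C ρ * gg2 C ρ) / 4)) ρ := by
  have hA := (hasDerivAt_gg C ρ).rpow_const (p := (-(3 / 2) : ℝ)) (Or.inl hg.ne')
  have := ((hA.mul (hasDerivAt_gg1 C ρ)).const_mul (-(1 / 2) : ℝ))
  have heq : FF1 C = fun y => -(1 / 2) * (gg C y ^ (-(3 / 2) : ℝ) * gg1 C y) := by
    funext y; unfold FF1; ring
  rw [heq]
  refine this.congr_deriv ?_
  rw [show (-(3 / 2) : ℝ) - 1 = -(5 / 2) by norm_num,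
    show (-(3 / 2) : ℝ) = -(5 / 2) + 1 by norm_num, Real.rpow_add hg, Real.rpow_one]
  ring

lemma key_pos (C ρ : ℝ) (hρ : 0 < ρ) (hD : 1 < C * ρ ^ 2 * Real.exp (-ρ ^ 2)) :
    0 < 3 * gg1 C ρ ^ 2 - 2 * gg C ρ * gg2 C ρ := by
  set E := Real.exp (-ρ ^ 2) with hE
  set D := C * ρ ^ 2 * E with hDdef
  set x := ρ ^ 2 with hx
  have hid : 3 * gg1 C ρ ^ 2 - 2 * gg C ρ * gg2 C ρ =
      4 * ρ ^ 2 * ((x ^ 2 - 3 * x + 6) * D ^ 2 + (2 * x ^ 2 - 3 * x - 5) * D + 2) := by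
    unfold gg gg1 gg2
    rw [hDdef, hx]
    ring
  rw [hid]
  have hx0 : 0 < x := by positivity
  have h47 : 0 < 4 * x ^ 2 - 9 * x + 7 := by nlinarith [sq_nonneg (8 * x - 9)]
  have h6 : 0 ≤ x ^ 2 - 3 * x + 6 := by nlinarith [sq_nonneg (x - 3 / 2)]
  have hD1 : 0 < D - 1 := by linarith
  have hQ : 0 < (x ^ 2 - 3 * x + 6) * D ^ 2 + (2 * x ^ 2 - 3 * x - 5) * D + 2 := by
    nlinarith [sq_nonneg (x - 1), mul_pos hD1 h47, mul_nonneg h6 (sq_nonneg (D - 1))]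
  positivity

theorem f_strictly_convex (R : ℝ) (hR : 1 < R) :
    StrictConvexOn ℝ {ρ : ℝ | 0 < ρ ∧ mu ρ < mu R} (fun ρ => f ρ R) := by
  set C := Real.exp (2 * mu R) with hC
  set S := {ρ : ℝ | 0 < ρ ∧ mu ρ < mu R} with hSdef
  -- basic facts on S
  have hD_gt : ∀ ρ ∈ S, 1 < C * ρ ^ 2 * Real.exp (-ρ ^ 2) := by
    intro ρ hρ
    obtain ⟨hρ0, hmu⟩ := hρ
    have h1 : ρ ^ 2 * Real.exp (-ρ ^ 2) = Real.exp (-(2 * mu ρ)) := by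
      rw [mu]
      rw [show -(2 * (ρ ^ 2 / 2 - Real.log ρ)) = -ρ ^ 2 + 2 * Real.log ρ by ring,
        Real.exp_add, show (2 : ℝ) * Real.log ρ = Real.log ρ + Real.log ρ by ring,
        Real.exp_add, Real.exp_log hρ0]
      ring
    rw [mul_assoc, h1, hC, ← Real.exp_add]
    rw [show (1 : ℝ) = Real.exp 0 by simp, Real.exp_lt_exp]
    linarith
  have hg_pos : ∀ ρ ∈ S, 0 < gg C ρ := by
    intro ρ hρ
    have h := hD_gt ρ hρ
    have hρ0 := hρ.1
    have : gg C ρ = ρ ^ 2 * (C * ρ ^ 2 * Real.exp (-ρ ^ 2) - 1) := by unfold gg; ring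
    rw [this]
    have : 0 < ρ ^ 2 := by positivity
    nlinarith
  -- f = FF on S
  have hEq : Set.EqOn (fun ρ => f ρ R) (FF C) S := by
    intro ρ hρ
    obtain ⟨hρ0, hmu⟩ := hρ
    set t := mu ρ - mu R with ht
    have ht0 : t < 0 := by linarith
    have hu : Real.exp t < 1 := by
      rw [show (1 : ℝ) = Real.exp 0 by simp, Real.exp_lt_exp]; exact ht0
    have hu0 : 0 < Real.exp t := Real.exp_pos t
    have h2t : Real.exp (2 * t) = Real.exp t ^ 2 := by
      rw [show (2 : ℝ) * t = t + t by ring, Real.exp_add]; ring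
    have h1u : 0 < 1 - Real.exp (2 * t) := by
      rw [h2t]; nlinarith
    have hsqrt_pos : 0 < Real.sqrt (1 - Real.exp (2 * t)) := Real.sqrt_pos.mpr h1u
    have hgval : gg C ρ = (ρ * Real.sqrt (1 - Real.exp (2 * t)) / Real.exp t) ^ 2 := by
      have hsq : Real.sqrt (1 - Real.exp (2 * t)) ^ 2 = 1 - Real.exp (2 * t) :=
        Real.sq_sqrt h1u.le
      have hCe : C * (ρ ^ 2 * Real.exp (-ρ ^ 2)) = Real.exp (-2 * t) / 1 := by
        have h1 : ρ ^ 2 * Real.exp (-ρ ^ 2) = Real.exp (-(2 * mu ρ)) := by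
          rw [mu]
          rw [show -(2 * (ρ ^ 2 / 2 - Real.log ρ)) = -ρ ^ 2 + 2 * Real.log ρ by ring,
            Real.exp_add, show (2 : ℝ) * Real.log ρ = Real.log ρ + Real.log ρ by ring,
            Real.exp_add, Real.exp_log hρ0]
          ring
        rw [h1, hC, ← Real.exp_add, ht]
        ring_nf
      have hinv : Real.exp (-2 * t) = (Real.exp t)⁻¹ ^ 2 := by
        rw [show (-2 : ℝ) * t = -t + -t by ring, Real.exp_add, Real.exp_neg]; ring
      have hCe4 : C * (ρ ^ 4 * Real.exp (-ρ ^ 2)) = ρ ^ 2 * (Real.exp t)⁻¹ ^ 2 := by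
        have h4 : C * (ρ ^ 4 * Real.exp (-ρ ^ 2)) = ρ ^ 2 * (C * (ρ ^ 2 * Real.exp (-ρ ^ 2))) := by
          ring
        rw [h4, hCe, hinv]; ring
      unfold gg
      rw [div_pow, mul_pow, hsq, hCe4, h2t]
      field_simp
    have hpos : 0 < ρ * Real.sqrt (1 - Real.exp (2 * t)) / Real.exp t := by positivity
    show f ρ R = FF C ρ
    rw [FF, hgval]
    rw [← Real.rpow_natCast (ρ * Real.sqrt (1 - Real.exp (2 * t)) / Real.exp t) 2,
      ← Real.rpow_mul hpos.le]
    norm_num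
    rw [Real.rpow_neg_one]
    rw [f, ht]
    field_simp
  -- openness of S
  have hS_open : IsOpen S := by
    have hmu_cont : ContinuousOn mu (Ioi (0 : ℝ)) := by
      apply ContinuousOn.sub
      · exact (continuous_pow 2).continuousOn.div_const 2
      · exact Real.continuousOn_log.mono (by intro x hx; simpa using ne_of_gt hx)
    have : S = Ioi (0 : ℝ) ∩ mu ⁻¹' Iio (mu R) := by
      ext x; simp [hSdef, mem_setOf_eq, and_comm]
    rw [this]
    exact hmu_cont.isOpen_inter_preimage isOpen_Ioi isOpen_Iio
  -- convexity of S
  have hS_convex : Convex ℝ S := by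
    have hconv : ConvexOn ℝ (Ioi (0 : ℝ)) mu := by
      have h1 : ConvexOn ℝ (Ioi (0 : ℝ)) (fun x : ℝ => x ^ 2 / 2) := by
        have := (Even.convexOn_pow (n := 2) (by norm_num)).subset
          (subset_univ (Ioi (0:ℝ))) (convex_Ioi 0)
        simpa [div_eq_mul_inv, mul_comm] using this.smul (by norm_num : (0:ℝ) ≤ 1/2)
      have h2 : ConvexOn ℝ (Ioi (0 : ℝ)) (fun x : ℝ => -Real.log x) :=
        strictConcaveOn_log_Ioi.concaveOn.neg
      have := h1.add h2
      exact this.congr (fun x _ => by simp [mu, sub_eq_add_neg])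
    have : S = {x ∈ Ioi (0 : ℝ) | mu x < mu R} := by
      ext x; simp [hSdef, mem_setOf_eq]
    rw [this]
    exact hconv.convex_lt (mu R)
  -- continuity
  have hFF_diff : ∀ ρ ∈ S, HasDerivAt (FF C) (FF1 C ρ) ρ := fun ρ hρ =>
    hasDerivAt_FF C ρ (hg_pos ρ hρ)
  have hcont : ContinuousOn (fun ρ => f ρ R) S := by
    apply ContinuousOn.congr _ hEq
    intro ρ hρ
    exact (hFF_diff ρ hρ).continuousAt.continuousWithinAt
  apply strictConvexOn_of_deriv2_pos hS_convex hcont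
  intro ρ hρ
  rw [hS_open.interior_eq] at hρ
  -- second derivative
  have hev : ∀ x ∈ S, (fun ρ => f ρ R) =ᶠ[nhds x] FF C := fun x hx =>
    Filter.eventuallyEq_of_mem (hS_open.mem_nhds hx) hEq
  have hderiv1 : Set.EqOn (deriv (fun ρ => f ρ R)) (FF1 C) S := by
    intro x hx
    rw [(hev x hx).deriv_eq, (hFF_diff x hx).deriv]
  have hev1 : deriv (fun ρ => f ρ R) =ᶠ[nhds ρ] FF1 C :=
    Filter.eventuallyEq_of_mem (hS_open.mem_nhds hρ) hderiv1
  have h2 : deriv^[2] (fun ρ => f ρ R) ρ =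
      gg C ρ ^ (-(5 / 2) : ℝ) * ((3 * gg1 C ρ ^ 2 - 2 * gg C ρ * gg2 C ρ) / 4) := by
    show deriv (deriv (fun ρ => f ρ R)) ρ = _
    rw [hev1.deriv_eq, (hasDerivAt_FF1 C ρ (hg_pos ρ hρ)).deriv]
  rw [h2]
  have hkey := key_pos C ρ hρ.1 (hD_gt ρ hρ)
  have := Real.rpow_pos_of_pos (hg_pos ρ hρ) (-(5 / 2) : ℝ)
  positivity
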